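/- arXiv:1505.00220 — 4 statements merged into one kernel-verified Lean document; each statement's English description precedes it below -/
import Mathlib

section
/- Let C be a codifferential category with finite coproducts. For a T-algebra A and an object (B, M) of Mod_T, let Der(A, (B, M)) denote the set of pairs (g, ∂) where g : A → B is a T-algebra homomorphism and ∂ : A → M_A is a T-derivation. Then the assignment f ↦ (f;π₁, f;π₂) defines a bijection C^T(A, W(B,M)) ≅ Der(A, (B, M)), natural in A ∈ C^T and in (B, M) ∈ Mod_T. -/
open CategoryTheory CategoryTheory.Limits CategoryTheory.MonoidalCategory

universe v u

namespace CodiffPaper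

/-- A category enriched in commutative monoids: each hom-set is a commutative
monoid and composition is biadditive (and preserves zero). -/
class CMonEnriched (C : Type u) [Category.{v} C] where
  [homMonoid : ∀ X Y : C, AddCommMonoid (X ⟶ Y)]
  add_comp : ∀ {X Y Z : C} (f g : X ⟶ Y) (h : Y ⟶ Z), (f + g) ≫ h = f ≫ h + g ≫ h
  comp_add : ∀ {X Y Z : C} (f : X ⟶ Y) (g h : Y ⟶ Z), f ≫ (g + h) = f ≫ g + f ≫ h
  zero_comp : ∀ {X Y Z : C} (f : Y ⟶ Z), (0 : X ⟶ Y) ≫ f = (0 : X ⟶ Z)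
  comp_zero : ∀ {X Y Z : C} (f : X ⟶ Y), f ≫ (0 : Y ⟶ Z) = (0 : X ⟶ Z)

attribute [instance] CMonEnriched.homMonoid

instance (priority := 100) CMonEnriched.toHasZeroMorphisms
    (C : Type u) [Category.{v} C] [CMonEnriched C] : HasZeroMorphisms C where
  zero X Y := inferInstance
  comp_zero := fun {X Y} f Z => CMonEnriched.comp_zero f
  zero_comp := fun X {Y Z} f => CMonEnriched.zero_comp f

/-- An additive symmetric monoidal category: commutative-monoid enriched, and
the tensor product is additive in each variable. -/
class AdditiveMonoidal (C : Type u) [Category.{v} C] [MonoidalCategory C] extends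
    CMonEnriched C where
  add_tensorHom : ∀ {X Y Z W : C} (f g : X ⟶ Y) (h : Z ⟶ W),
    (f + g) ⊗ₘ h = (f ⊗ₘ h) + (g ⊗ₘ h)
  tensorHom_add : ∀ {X Y Z W : C} (f : X ⟶ Y) (g h : Z ⟶ W),
    f ⊗ₘ (g + h) = (f ⊗ₘ g) + (f ⊗ₘ h)
  zero_tensorHom : ∀ {X Y Z W : C} (h : Z ⟶ W), (0 : X ⟶ Y) ⊗ₘ h = 0
  tensorHom_zero : ∀ {X Y Z W : C} (f : X ⟶ Y), f ⊗ₘ (0 : Z ⟶ W) = 0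

variable {C : Type u} [Category.{v} C]

/-- `π : Y ⟶ Q` is a coequalizer of `f` and `g` (elementwise formulation). -/
def IsCoeq {X Y Q : C} (f g : X ⟶ Y) (π : Y ⟶ Q) : Prop :=
  f ≫ π = g ≫ π ∧ ∀ {Z : C} (h : Y ⟶ Z), f ≫ h = g ≫ h → ∃! t : Q ⟶ Z, π ≫ t = h

/-- The tensor product preserves reflexive coequalizers in each variable. -/
def TensorPreservesReflCoeq (C : Type u) [Category.{v} C] [MonoidalCategory C] : Prop :=
  ∀ {X Y Q : C} (f g : X ⟶ Y) (s : Y ⟶ X) (π : Y ⟶ Q),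
    s ≫ f = 𝟙 Y → s ≫ g = 𝟙 Y → IsCoeq f g π →
      ∀ Z : C, IsCoeq (Z ◁ f) (Z ◁ g) (Z ◁ π) ∧ IsCoeq (f ▷ Z) (g ▷ Z) (π ▷ Z)

section Monoidal

variable [MonoidalCategory C]

/-- A commutative algebra (commutative monoid object) structure. -/
structure IsCommAlg [SymmetricCategory C] {A : C} (mul : A ⊗ A ⟶ A) (unit : 𝟙_ C ⟶ A) : Prop where
  one_mul : (unit ▷ A) ≫ mul = (λ_ A).hom
  mul_one : (A ◁ unit) ≫ mul = (ρ_ A).hom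
  mul_assoc : (mul ▷ A) ≫ mul = (α_ A A A).hom ≫ (A ◁ mul) ≫ mul
  mul_comm : (β_ A A).hom ≫ mul = mul

/-- `f : A ⟶ B` is a homomorphism of algebras. -/
structure IsAlgHom {A B : C} (mulA : A ⊗ A ⟶ A) (unitA : 𝟙_ C ⟶ A)
    (mulB : B ⊗ B ⟶ B) (unitB : 𝟙_ C ⟶ B) (f : A ⟶ B) : Prop where
  map_mul : (f ⊗ₘ f) ≫ mulB = mulA ≫ f
  map_one : unitA ≫ f = unitB

/-- `act : A ⊗ M ⟶ M` is a module structure on `M` over the algebra `(A, mulA, unitA)`. -/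
structure IsModule {A M : C} (mulA : A ⊗ A ⟶ A) (unitA : 𝟙_ C ⟶ A)
    (act : A ⊗ M ⟶ M) : Prop where
  one_act : (unitA ▷ M) ≫ act = (λ_ M).hom
  mul_act : (mulA ▷ M) ≫ act = (α_ A A M).hom ≫ (A ◁ act) ≫ act

/-- A morphism of modules over `A` (a linear map). -/
def IsModuleMap {A M N : C} (actM : A ⊗ M ⟶ M) (actN : A ⊗ N ⟶ N) (h : M ⟶ N) : Prop :=
  actM ≫ h = (A ◁ h) ≫ actN

/-- The free `A`-module structure on `A ⊗ X`. -/
def freeAct {A : C} (mulA : A ⊗ A ⟶ A) (X : C) : A ⊗ (A ⊗ X) ⟶ A ⊗ X :=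
  (α_ A A X).inv ≫ (mulA ▷ X)

/-- `der : A ⟶ M` is a derivation from the algebra `(A, mulA, unitA)` to the module
`(M, act)`:  `m;der = c;(1⊗der);• + (1⊗der);•` and `e;der = 0`. -/
def IsDerivation [SymmetricCategory C] [CMonEnriched C] {A M : C}
    (mulA : A ⊗ A ⟶ A) (unitA : 𝟙_ C ⟶ A) (act : A ⊗ M ⟶ M) (der : A ⟶ M) : Prop :=
  (mulA ≫ der = (β_ A A).hom ≫ (A ◁ der) ≫ act + (A ◁ der) ≫ act) ∧ unitA ≫ der = 0

variable [SymmetricCategory C]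

/-- An algebra modality: each `T X` is naturally a commutative algebra. -/
structure IsAlgebraModality (T : Monad C)
    (mul : ∀ X : C, T.obj X ⊗ T.obj X ⟶ T.obj X)
    (unit : ∀ X : C, 𝟙_ C ⟶ T.obj X) : Prop where
  commAlg : ∀ X : C, IsCommAlg (mul X) (unit X)
  map_hom : ∀ {X Y : C} (f : X ⟶ Y),
    IsAlgHom (mul X) (unit X) (mul Y) (unit Y) (T.map f)
  mu_hom : ∀ X : C,
    IsAlgHom (mul (T.obj X)) (unit (T.obj X)) (mul X) (unit X) (T.μ.app X)

/-- A (bundled) algebra modality on `C`. -/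
structure AlgebraModality (C : Type u) [Category.{v} C] [MonoidalCategory C]
    [SymmetricCategory C] where
  T : Monad C
  mul : ∀ X : C, T.obj X ⊗ T.obj X ⟶ T.obj X
  unit : ∀ X : C, 𝟙_ C ⟶ T.obj X
  ismod : IsAlgebraModality T mul unit

/-- The multiplication of the commutative algebra induced on a `T`-algebra. -/
def algMul (Φ : AlgebraModality C) (A : Φ.T.Algebra) : A.A ⊗ A.A ⟶ A.A :=
  (Φ.T.η.app A.A ⊗ₘ Φ.T.η.app A.A) ≫ Φ.mul A.A ≫ A.a

/-- The unit of the commutative algebra induced on a `T`-algebra. -/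
def algUnit (Φ : AlgebraModality C) (A : Φ.T.Algebra) : 𝟙_ C ⟶ A.A :=
  Φ.unit A.A ≫ A.a

/-- `f : A ⟶ B` is a homomorphism of `T`-algebras (elementwise formulation). -/
def IsTAlgebraHom (T : Monad C) {A B : C} (νA : T.obj A ⟶ A) (νB : T.obj B ⟶ B)
    (f : A ⟶ B) : Prop :=
  T.map f ≫ νB = νA ≫ f

/-- `b : T X ⟶ X` is a `T`-algebra structure map. -/
def IsTAlgStr (T : Monad C) {X : C} (b : T.obj X ⟶ X) : Prop :=
  (T.η.app X ≫ b = 𝟙 X) ∧ (T.μ.app X ≫ b = T.map b ≫ b)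

variable [AdditiveMonoidal C]

/-- The axioms for a codifferential category on an additive symmetric monoidal
category: an algebra modality together with a deriving transform satisfying
(d1)–(d4). -/
structure IsCodifferential (T : Monad C)
    (mul : ∀ X : C, T.obj X ⊗ T.obj X ⟶ T.obj X)
    (unit : ∀ X : C, 𝟙_ C ⟶ T.obj X)
    (d : ∀ X : C, T.obj X ⟶ T.obj X ⊗ X) : Prop where
  ismod : IsAlgebraModality T mul unit
  d_natural : ∀ {X Y : C} (f : X ⟶ Y), T.map f ≫ d Y = d X ≫ (T.map f ⊗ₘ f)
  d1 : ∀ X : C, unit X ≫ d X = 0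
  d2 : ∀ X : C, mul X ≫ d X =
    (T.obj X ◁ d X) ≫ (α_ (T.obj X) (T.obj X) X).inv ≫ (mul X ▷ X)
    + (d X ▷ T.obj X) ≫ (α_ (T.obj X) X (T.obj X)).hom ≫
        (T.obj X ◁ (β_ X (T.obj X)).hom) ≫ (α_ (T.obj X) (T.obj X) X).inv ≫ (mul X ▷ X)
  d3 : ∀ X : C, T.η.app X ≫ d X = (λ_ X).inv ≫ (unit X ▷ X)
  d4 : ∀ X : C, T.μ.app X ≫ d X =
    d (T.obj X) ≫ (T.μ.app X ⊗ₘ d X) ≫ (α_ (T.obj X) (T.obj X) X).inv ≫ (mul X ▷ X)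

/-- A (bundled) codifferential category structure on `C`. -/
structure Codifferential (C : Type u) [Category.{v} C] [MonoidalCategory C]
    [SymmetricCategory C] [AdditiveMonoidal C] extends AlgebraModality C where
  d : ∀ X : C, T.obj X ⟶ T.obj X ⊗ X
  iscodiff : IsCodifferential T mul unit d

section Biproducts

variable [HasBinaryBiproducts C]

/-- The second component of the structure map of `W(A,M)`:
`β₂ = d;(Tπ₁ ⊗ π₂);(ν ⊗ 1);•`. -/
noncomputable def Wbeta2 (D : Codifferential C) (A : D.T.Algebra) {M : C} (act : A.A ⊗ M ⟶ M) :
    D.T.obj (A.A ⊞ M) ⟶ M :=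
  D.d (A.A ⊞ M) ≫ (D.T.map biprod.fst ⊗ₘ biprod.snd) ≫ (A.a ⊗ₘ 𝟙 M) ≫ act

/-- The structure map `β = ⟨β₁, β₂⟩ : T(A ⊕ M) ⟶ A ⊕ M` of `W(A,M)`. -/
noncomputable def Wbeta (D : Codifferential C) (A : D.T.Algebra) {M : C} (act : A.A ⊗ M ⟶ M) :
    D.T.obj (A.A ⊞ M) ⟶ A.A ⊞ M :=
  biprod.lift (D.T.map biprod.fst ≫ A.a) (Wbeta2 D A act)

end Biproducts

/-- A Kähler category: an additive symmetric monoidal category with an algebra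
modality such that every algebra `T X` has a module of Kähler differentials. -/
structure KahlerCategory (C : Type u) [Category.{v} C] [MonoidalCategory C]
    [SymmetricCategory C] [AdditiveMonoidal C] extends AlgebraModality C where
  Ω : C → C
  act : ∀ X : C, T.obj X ⊗ Ω X ⟶ Ω X
  ismodule : ∀ X : C, IsModule (mul X) (unit X) (act X)
  dK : ∀ X : C, T.obj X ⟶ Ω X
  isder : ∀ X : C, IsDerivation (mul X) (unit X) (act X) (dK X)
  universal : ∀ (X : C) {M : C} (actM : T.obj X ⊗ M ⟶ M),
    IsModule (mul X) (unit X) actM →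
    ∀ der : T.obj X ⟶ M, IsDerivation (mul X) (unit X) actM der →
      ∃! h : Ω X ⟶ M, IsModuleMap (act X) actM h ∧ dK X ≫ h = der

end Monoidal


section Aux

variable {C : Type u} [Category.{v} C] [MonoidalCategory C] [SymmetricCategory C]
  [AdditiveMonoidal C] [HasBinaryBiproducts C]

/-- Composing a lifted map with `Wbeta2` reduces to a simple tensor form. -/
lemma comp_Wbeta2 (D : Codifferential C) (B : D.T.Algebra) {M : C} (act : B.A ⊗ M ⟶ M)
    {X : C} (h : X ⟶ B.A ⊞ M) :
    D.T.map h ≫ Wbeta2 D B act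
      = D.d X ≫ ((D.T.map (h ≫ biprod.fst) ≫ B.a) ⊗ₘ (h ≫ biprod.snd)) ≫ act := by
  unfold Wbeta2
  rw [← Category.assoc, D.iscodiff.d_natural h]
  simp only [Category.assoc]
  rw [← Category.assoc (D.T.map h ⊗ₘ h), tensorHom_comp_tensorHom, ← D.T.toFunctor.map_comp,
    ← Category.assoc (D.T.map (h ≫ biprod.fst) ⊗ₘ (h ≫ biprod.snd)), tensorHom_comp_tensorHom,
    Category.comp_id]

lemma whisker_tensor_comp {X X' Y Z M N : C} (p : X ⟶ Y) (q : X' ⟶ M) (g : Y ⟶ Z)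
    (act : Z ⊗ M ⟶ N) : (p ⊗ₘ q) ≫ (g ▷ M) ≫ act = ((p ≫ g) ⊗ₘ q) ≫ act := by
  rw [← tensorHom_id, tensorHom_comp_tensorHom_assoc, Category.comp_id]

end Aux

/-- the assignment `f ↦ (f ; π₁, f ; π₂)` is a bijection
`C^T(A, W(B,M)) ≅ Der(A, (B,M))`. -/
theorem statement15 {C : Type u} [Category.{v} C] [MonoidalCategory C] [SymmetricCategory C]
    [AdditiveMonoidal C] [HasBinaryBiproducts C]
    (D : Codifferential C) (A B : D.T.Algebra) {M : C} (act : B.A ⊗ M ⟶ M)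
    (hact : IsModule (algMul D.toAlgebraModality B) (algUnit D.toAlgebraModality B) act)
    (hW : IsTAlgStr D.T (Wbeta D B act)) :
    -- `f ↦ (f ; π₁, f ; π₂)` lands in `Der(A, (B,M))` ...
    (∀ f : A ⟶ (⟨B.A ⊞ M, Wbeta D B act, hW.1, hW.2⟩ : D.T.Algebra),
      IsTAlgebraHom D.T A.a B.a (f.f ≫ biprod.fst) ∧
      D.T.map (biprod.lift (𝟙 A.A) (f.f ≫ biprod.snd)) ≫
          Wbeta D A (((f.f ≫ biprod.fst) ▷ M) ≫ act)
        = A.a ≫ biprod.lift (𝟙 A.A) (f.f ≫ biprod.snd)) ∧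
    -- ... and is bijective: every pair `(g, der)` arises from a unique `f`
    (∀ (g : A.A ⟶ B.A) (der : A.A ⟶ M),
      IsTAlgebraHom D.T A.a B.a g →
      D.T.map (biprod.lift (𝟙 A.A) der) ≫ Wbeta D A ((g ▷ M) ≫ act)
        = A.a ≫ biprod.lift (𝟙 A.A) der →
      ∃! f : A ⟶ (⟨B.A ⊞ M, Wbeta D B act, hW.1, hW.2⟩ : D.T.Algebra),
        f.f = biprod.lift g der) := by
  constructor
  · intro f
    have hf := f.h
    -- first component of the algebra-morphism equation
    have hfst : D.T.map f.f ≫ D.T.map biprod.fst ≫ B.a = A.a ≫ f.f ≫ biprod.fst := by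
      have := congrArg (fun t => t ≫ (biprod.fst : B.A ⊞ M ⟶ B.A)) hf
      simpa [Wbeta, Category.assoc] using this
    -- second component
    have hsnd : D.T.map f.f ≫ Wbeta2 D B act = A.a ≫ f.f ≫ biprod.snd := by
      have := congrArg (fun t => t ≫ (biprod.snd : B.A ⊞ M ⟶ M)) hf
      simpa [Wbeta, Category.assoc] using this
    have h1 : IsTAlgebraHom D.T A.a B.a (f.f ≫ biprod.fst) := by
      unfold IsTAlgebraHom
      rw [D.T.toFunctor.map_comp, Category.assoc]
      exact hfst
    refine ⟨h1, ?_⟩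
    apply biprod.hom_ext
    · simp only [Wbeta, Category.assoc, biprod.lift_fst]
      rw [← Category.assoc, ← D.T.toFunctor.map_comp, biprod.lift_fst,
        D.T.toFunctor.map_id, Category.id_comp, Category.comp_id]
    · simp only [Wbeta, Category.assoc, biprod.lift_snd]
      rw [comp_Wbeta2 D A, biprod.lift_fst, biprod.lift_snd]
      simp only [D.T.toFunctor.map_id, Category.id_comp]
      rw [whisker_tensor_comp]
      rw [comp_Wbeta2 D B act f.f, D.T.toFunctor.map_comp] at hsnd
      simp only [Category.assoc] at hsnd
      rw [← hfst]
      exact hsnd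
  · intro g der hg hder
    have hder2 : D.T.map (biprod.lift (𝟙 A.A) der) ≫ Wbeta2 D A ((g ▷ M) ≫ act)
        = A.a ≫ der := by
      have := congrArg (fun t => t ≫ (biprod.snd : A.A ⊞ M ⟶ M)) hder
      simpa [Wbeta, Category.assoc] using this
    have key : D.T.map (biprod.lift g der) ≫ Wbeta D B act
        = A.a ≫ biprod.lift g der := by
      apply biprod.hom_ext
      · simp only [Wbeta, Category.assoc, biprod.lift_fst]
        rw [← Category.assoc, ← D.T.toFunctor.map_comp, biprod.lift_fst]
        exact hg
      · simp only [Wbeta, Category.assoc, biprod.lift_snd]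
        rw [comp_Wbeta2 D B, biprod.lift_fst, biprod.lift_snd]
        rw [comp_Wbeta2 D A, biprod.lift_fst, biprod.lift_snd] at hder2
        simp only [D.T.toFunctor.map_id, Category.id_comp] at hder2
        rw [whisker_tensor_comp] at hder2
        have hg' : D.T.map g ≫ B.a = A.a ≫ g := hg
        rw [hg']
        exact hder2
    refine ⟨⟨biprod.lift g der, key⟩, rfl, ?_⟩
    intro f' hf'
    exact Monad.Algebra.Hom.ext hf'

end CodiffPaper
end

section
/- Let C be a codifferential category with finite coproducts, g : A → B a morphism of T-algebras, and M a module over the induced algebra B. Then there is a natural bijection between morphisms A → W(B,M) in the slice category C^T/B (where A lies over B via g and W(B,M) via π₁) and T-derivations ∂ : A → M_A, given by f ↦ f;π₂. -/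
open CategoryTheory CategoryTheory.Limits CategoryTheory.MonoidalCategory

universe v u

namespace CodiffPaper

variable {C : Type u} [Category.{v} C]

/-- `biprod.map g.f (𝟙 M)` intertwines the `W`-structure maps. -/
theorem Wmap_intertwine {C : Type u} [Category.{v} C] [MonoidalCategory C] [SymmetricCategory C]
    [AdditiveMonoidal C] [HasBinaryBiproducts C]
    (D : Codifferential C) (A B : D.T.Algebra) (g : A ⟶ B) {M : C} (act : B.A ⊗ M ⟶ M) :
    D.T.map (biprod.map g.f (𝟙 M)) ≫ Wbeta D B act
      = Wbeta D A ((g.f ▷ M) ≫ act) ≫ biprod.map g.f (𝟙 M) := by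
  apply biprod.hom_ext
  · simp only [Wbeta, Category.assoc, biprod.lift_fst, biprod.map_fst, biprod.lift_fst_assoc,
      ← Functor.map_comp_assoc, biprod.map_fst]
    rw [Functor.map_comp, Category.assoc, g.h]
  · simp only [Wbeta, Category.assoc, biprod.lift_snd, biprod.map_snd, Category.comp_id,
      biprod.lift_snd_assoc]
    show D.T.map (biprod.map g.f (𝟙 M)) ≫ Wbeta2 D B act = Wbeta2 D A ((g.f ▷ M) ≫ act)
    unfold Wbeta2
    rw [reassoc_of% D.iscodiff.d_natural (biprod.map g.f (𝟙 M))]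
    have h1 : (D.T.map (biprod.map g.f (𝟙 M)) ⊗ₘ biprod.map g.f (𝟙 M)) ≫
        (D.T.map biprod.fst ⊗ₘ biprod.snd)
        = (D.T.map biprod.fst ⊗ₘ biprod.snd) ≫ (D.T.map g.f ⊗ₘ 𝟙 M) := by
      rw [MonoidalCategory.tensorHom_comp_tensorHom, MonoidalCategory.tensorHom_comp_tensorHom,
        ← Functor.map_comp, ← Functor.map_comp, biprod.map_fst, biprod.map_snd]
    have h2 : (D.T.map g.f ⊗ₘ 𝟙 M) ≫ (B.a ⊗ₘ 𝟙 M) = (A.a ⊗ₘ 𝟙 M) ≫ (g.f ⊗ₘ 𝟙 M) := by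
      rw [MonoidalCategory.tensorHom_comp_tensorHom, MonoidalCategory.tensorHom_comp_tensorHom, g.h, Category.comp_id]
    rw [reassoc_of% h1, reassoc_of% h2, MonoidalCategory.tensorHom_id,
      MonoidalCategory.tensorHom_id]


/-- for a `T`-algebra map `g : A ⟶ B`, morphisms `A ⟶ W(B,M)` in the slice
category `C^T/B` correspond bijectively, via `f ↦ f ; π₂`, to `T`-derivations
`der : A ⟶ M_A`. -/
theorem statement16 {C : Type u} [Category.{v} C] [MonoidalCategory C] [SymmetricCategory C]
    [AdditiveMonoidal C] [HasBinaryBiproducts C]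
    (D : Codifferential C) (A B : D.T.Algebra) (g : A ⟶ B) {M : C} (act : B.A ⊗ M ⟶ M)
    (hact : IsModule (algMul D.toAlgebraModality B) (algUnit D.toAlgebraModality B) act)
    (hW : IsTAlgStr D.T (Wbeta D B act)) :
    -- every morphism over `B` yields a `T`-derivation into `M_A` ...
    (∀ f : A ⟶ (⟨B.A ⊞ M, Wbeta D B act, hW.1, hW.2⟩ : D.T.Algebra),
      f.f ≫ biprod.fst = g.f →
      D.T.map (biprod.lift (𝟙 A.A) (f.f ≫ biprod.snd)) ≫ Wbeta D A ((g.f ▷ M) ≫ act)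
        = A.a ≫ biprod.lift (𝟙 A.A) (f.f ≫ biprod.snd)) ∧
    -- ... and every `T`-derivation arises from a unique morphism over `B`
    (∀ der : A.A ⟶ M,
      D.T.map (biprod.lift (𝟙 A.A) der) ≫ Wbeta D A ((g.f ▷ M) ≫ act)
        = A.a ≫ biprod.lift (𝟙 A.A) der →
      ∃! f : A ⟶ (⟨B.A ⊞ M, Wbeta D B act, hW.1, hW.2⟩ : D.T.Algebra),
        f.f ≫ biprod.fst = g.f ∧ f.f ≫ biprod.snd = der) := by
  have key := Wmap_intertwine D A B g act
  constructor
  · intro f hfst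
    have fh : D.T.map f.f ≫ Wbeta D B act = A.a ≫ f.f := f.h
    have hff : f.f = biprod.lift (𝟙 A.A) (f.f ≫ biprod.snd) ≫ biprod.map g.f (𝟙 M) := by
      apply biprod.hom_ext <;> simp [hfst]
    apply biprod.hom_ext
    · simp [Wbeta, ← Functor.map_comp_assoc]
    · simp only [Wbeta, Category.assoc, biprod.lift_snd]
      show D.T.map (biprod.lift (𝟙 A.A) (f.f ≫ biprod.snd)) ≫ Wbeta2 D A ((g.f ▷ M) ≫ act)
        = A.a ≫ f.f ≫ biprod.snd
      have h2 : Wbeta2 D A ((g.f ▷ M) ≫ act)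
          = Wbeta D A ((g.f ▷ M) ≫ act) ≫ biprod.map g.f (𝟙 M) ≫ biprod.snd := by
        simp [Wbeta]
      rw [h2, ← reassoc_of% key, ← Functor.map_comp_assoc, ← hff, reassoc_of% fh]
  · intro der hder
    refine ⟨⟨biprod.lift g.f der, ?_⟩, ⟨by simp, by simp⟩, ?_⟩
    · show D.T.map (biprod.lift g.f der) ≫ Wbeta D B act = A.a ≫ biprod.lift g.f der
      have hlift : biprod.lift g.f der
          = biprod.lift (𝟙 A.A) der ≫ biprod.map g.f (𝟙 M) := by
        apply biprod.hom_ext <;> simp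
      rw [hlift, Functor.map_comp, Category.assoc, key, ← Category.assoc, hder,
        Category.assoc]
    · rintro ⟨f2, hf2⟩ ⟨h1, h2⟩
      apply Monad.Algebra.Hom.ext
      apply biprod.hom_ext <;> simp [h1, h2]

end CodiffPaper
end

section
/- Let C be a codifferential category with finite coproducts and reflexive coequalizers, the latter preserved by the tensor product in each variable. Then every T-algebra (A, ν) admits a universal T-derivation: there exist a module Ω^T_A over the induced algebra A and a T-derivation d_A : A → Ω^T_A such that for every A-module M and every T-derivation ∂ : A → M there is a unique A-linear morphism ∂# : Ω^T_A → M with d_A;∂# = ∂. Moreover Ω^T_A can be constructed as the reflexive coequalizer Ω_ν : Ω^T_{T A} → Ω^T_A of the induced maps Ω_μ, Ω_{Tν} : Ω^T_{T²A} ⇉ Ω^T_{TA} between the Kähler T-modules of the free T-algebras, with d_A determined by ν;d_A = d_{TA};Ω_ν. -/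
open CategoryTheory CategoryTheory.Limits CategoryTheory.MonoidalCategory

universe v u

namespace CodiffPaper

variable {C : Type u} [Category.{v} C]

section Construction

variable {C : Type u} [Category.{v} C] [MonoidalCategory C]

theorem IsCoeq.epi_of {X Y Q : C} {f g : X ⟶ Y} {π : Y ⟶ Q} (h : IsCoeq f g π) : Epi π := by
  constructor
  intro Z u v huv
  obtain ⟨t, -, ht⟩ := h.2 (π ≫ u) (by rw [← Category.assoc, h.1, Category.assoc])
  rw [ht u rfl, ht v huv.symm]

theorem freeAct_def {A : C} (m : A ⊗ A ⟶ A) (X : C) :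
    freeAct m X = (α_ A A X).inv ≫ m ▷ X := rfl

variable [SymmetricCategory C]

theorem freeAct_one {P : C} {m : P ⊗ P ⟶ P} {u : 𝟙_ C ⟶ P}
    (h : IsCommAlg m u) (Y : C) :
    (u ▷ (P ⊗ Y)) ≫ freeAct m Y = (λ_ (P ⊗ Y)).hom := by
  rw [freeAct_def, associator_inv_naturality_left_assoc, ← comp_whiskerRight, h.one_mul,
    leftUnitor_tensor_hom]

theorem freeAct_mul {P : C} {m : P ⊗ P ⟶ P} {u : 𝟙_ C ⟶ P}
    (h : IsCommAlg m u) (Y : C) :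
    (m ▷ (P ⊗ Y)) ≫ freeAct m Y
      = (α_ P P (P ⊗ Y)).hom ≫ (P ◁ freeAct m Y) ≫ freeAct m Y := by
  conv_lhs => rw [freeAct_def, associator_inv_naturality_left_assoc, ← comp_whiskerRight,
    h.mul_assoc]
  conv_rhs => rw [freeAct_def, MonoidalCategory.whiskerLeft_comp, Category.assoc,
    associator_inv_naturality_middle_assoc]
  simp only [comp_whiskerRight, Category.assoc]
  monoidal

theorem extLin {P B : C} {mP : P ⊗ P ⟶ P} {m : B ⊗ B ⟶ B} {u : 𝟙_ C ⟶ B}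
    (hm : IsCommAlg m u) {g : P ⟶ B} (hg : (g ⊗ₘ g) ≫ m = mP ≫ g)
    {V W : C} (k : V ⟶ B ⊗ W) :
    freeAct mP V ≫ (g ⊗ₘ k) ≫ freeAct m W
      = (P ◁ ((g ⊗ₘ k) ≫ freeAct m W)) ≫ (g ▷ (B ⊗ W)) ≫ freeAct m W :=
  calc freeAct mP V ≫ (g ⊗ₘ k) ≫ freeAct m W
      = (α_ P P V).inv ≫ ((g ⊗ₘ g) ▷ V) ≫ (m ▷ V) ≫ (B ◁ k) ≫ freeAct m W := by
        rw [freeAct_def, MonoidalCategory.tensorHom_def]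
        slice_lhs 2 3 => rw [← comp_whiskerRight, ← hg, comp_whiskerRight]
        simp only [Category.assoc]
    _ = (α_ P P V).inv ≫ ((g ⊗ₘ g) ▷ V) ≫ ((B ⊗ B) ◁ k) ≫ (m ▷ (B ⊗ W)) ≫ freeAct m W := by
        rw [← whisker_exchange_assoc]
    _ = (α_ P P V).inv ≫ (((g ⊗ₘ g) ⊗ₘ k) ≫ (α_ B B (B ⊗ W)).hom) ≫ (B ◁ freeAct m W) ≫
          freeAct m W := by
        rw [freeAct_mul hm]
        slice_lhs 2 3 => rw [← MonoidalCategory.tensorHom_def]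
        simp only [Category.assoc]
    _ = (g ⊗ₘ (g ⊗ₘ k)) ≫ (B ◁ freeAct m W) ≫ freeAct m W := by
        rw [associator_naturality]
        simp only [Category.assoc, Iso.inv_hom_id_assoc]
    _ = (P ◁ ((g ⊗ₘ k) ≫ freeAct m W)) ≫ (g ▷ (B ⊗ W)) ≫ freeAct m W := by
        conv_rhs => rw [MonoidalCategory.whiskerLeft_comp]
        slice_rhs 2 3 => rw [whisker_exchange]
        slice_rhs 1 2 => rw [← tensorHom_def']
        simp only [Category.assoc]

end Construction


section Build

variable {C : Type u} [Category.{v} C] [MonoidalCategory C] [SymmetricCategory C]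
  [AdditiveMonoidal C] (D : Codifferential C)

theorem commAlgD (X : C) : IsCommAlg (D.mul X) (D.unit X) := D.iscodiff.ismod.commAlg X

theorem insertD (X : C) :
    (D.T.obj X ◁ (D.T.η.app X ≫ D.d X)) ≫ freeAct (D.mul X) X = 𝟙 (D.T.obj X ⊗ X) := by
  rw [D.iscodiff.d3, freeAct_def, MonoidalCategory.whiskerLeft_comp]
  simp only [Category.assoc]
  rw [associator_inv_naturality_middle_assoc, ← comp_whiskerRight, (commAlgD D X).mul_one]
  monoidal

variable (A : D.T.Algebra)

/-- `Ω_μ`, explicitly. -/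
def q1x : D.T.obj (D.T.obj A.A) ⊗ D.T.obj A.A ⟶ D.T.obj A.A ⊗ A.A :=
  (D.T.μ.app A.A ⊗ₘ D.d A.A) ≫ freeAct (D.mul A.A) A.A

/-- `Ω_{Tν}`, explicitly. -/
def q2x : D.T.obj (D.T.obj A.A) ⊗ D.T.obj A.A ⟶ D.T.obj A.A ⊗ A.A :=
  D.T.map A.a ⊗ₘ A.a

theorem hnatD : D.T.η.app (D.T.obj A.A) ≫ D.T.map A.a = A.a ≫ D.T.η.app A.A := by
  simpa using (D.T.η.naturality A.a).symm

theorem hnat2D : D.T.η.app A.A ≫ D.T.map (D.T.η.app A.A)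
    = D.T.η.app A.A ≫ D.T.η.app (D.T.obj A.A) := by
  simpa using (D.T.η.naturality (D.T.η.app A.A)).symm

theorem q1x_d : D.d (D.T.obj A.A) ≫ q1x D A = D.T.μ.app A.A ≫ D.d A.A := by
  rw [q1x, freeAct_def, D.iscodiff.d4]

theorem q2x_d : D.d (D.T.obj A.A) ≫ q2x D A = D.T.map A.a ≫ D.d A.A := by
  rw [q2x, ← D.iscodiff.d_natural]

theorem q1x_lin : freeAct (D.mul (D.T.obj A.A)) (D.T.obj A.A) ≫ q1x D A
    = (D.T.obj (D.T.obj A.A) ◁ q1x D A) ≫ (D.T.μ.app A.A ▷ (D.T.obj A.A ⊗ A.A)) ≫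
        freeAct (D.mul A.A) A.A := by
  rw [q1x]
  exact extLin (commAlgD D A.A) (D.iscodiff.ismod.mu_hom A.A).map_mul (D.d A.A)

theorem q2x_fold : (D.T.map A.a ⊗ₘ (A.a ≫ D.T.η.app A.A ≫ D.d A.A)) ≫ freeAct (D.mul A.A) A.A
    = q2x D A := by
  rw [q2x, MonoidalCategory.tensorHom_def, MonoidalCategory.whiskerLeft_comp]
  simp only [Category.assoc]
  rw [insertD, Category.comp_id, ← MonoidalCategory.tensorHom_def]

theorem q2x_lin : freeAct (D.mul (D.T.obj A.A)) (D.T.obj A.A) ≫ q2x D A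
    = (D.T.obj (D.T.obj A.A) ◁ q2x D A) ≫ (D.T.map A.a ▷ (D.T.obj A.A ⊗ A.A)) ≫
        freeAct (D.mul A.A) A.A := by
  rw [← q2x_fold]
  exact extLin (commAlgD D A.A) (D.iscodiff.ismod.map_hom A.a).map_mul _

/-- The common section of `q1x` and `q2x`. -/
def sx : D.T.obj A.A ⊗ A.A ⟶ D.T.obj (D.T.obj A.A) ⊗ D.T.obj A.A :=
  D.T.map (D.T.η.app A.A) ⊗ₘ D.T.η.app A.A

theorem s_q1 : sx D A ≫ q1x D A = 𝟙 (D.T.obj A.A ⊗ A.A) := by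
  rw [sx, q1x, tensorHom_comp_tensorHom_assoc, D.T.right_unit]
  simpa using insertD D A.A

theorem s_q2 : sx D A ≫ q2x D A = 𝟙 (D.T.obj A.A ⊗ A.A) := by
  rw [sx, q2x, tensorHom_comp_tensorHom, ← D.T.toFunctor.map_comp, A.unit]
  simp

theorem buildOmega (hpres : TensorPreservesReflCoeq C)
    {Q : C} (π : D.T.obj A.A ⊗ A.A ⟶ Q) (hcoeq : IsCoeq (q1x D A) (q2x D A) π) :
    ∃ (actQ : A.A ⊗ Q ⟶ Q) (dA : A.A ⟶ Q),
      IsModule (algMul D.toAlgebraModality A) (algUnit D.toAlgebraModality A) actQ ∧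
      A.a ≫ dA = D.d A.A ≫ π ∧
      (D.d A.A ≫ (A.a ⊗ₘ dA) ≫ actQ = A.a ≫ dA) ∧
      (∀ {M : C} (actM : A.A ⊗ M ⟶ M),
        IsModule (algMul D.toAlgebraModality A) (algUnit D.toAlgebraModality A) actM →
        ∀ der : A.A ⟶ M, D.d A.A ≫ (A.a ⊗ₘ der) ≫ actM = A.a ≫ der →
          ∃! h : Q ⟶ M, IsModuleMap actQ actM h ∧ dA ≫ h = der) := by
  have hca := commAlgD D A.A
  have hππ : q1x D A ≫ π = q2x D A ≫ π := hcoeq.1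
  have hw := fun Z : C => (hpres (q1x D A) (q2x D A) _ π (s_q1 D A) (s_q2 D A) hcoeq Z).1
  have q1linπ := congrArg (fun t => t ≫ π) (q1x_lin D A)
  have q2linπ := congrArg (fun t => t ≫ π) (q2x_lin D A)
  simp only [Category.assoc] at q1linπ q2linπ
  have E1 : (D.T.η.app (D.T.obj A.A) ▷ (D.T.obj (D.T.obj A.A) ⊗ D.T.obj A.A)) ≫
      freeAct (D.mul (D.T.obj A.A)) (D.T.obj A.A) ≫ q1x D A ≫ π
      = (D.T.obj A.A ◁ q1x D A) ≫ freeAct (D.mul A.A) A.A ≫ π := by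
    rw [q1linπ, ← whisker_exchange_assoc, ← comp_whiskerRight_assoc, D.T.left_unit,
      id_whiskerRight, Category.id_comp]
    rfl
  have E1' : (D.T.map (D.T.η.app A.A) ▷ (D.T.obj (D.T.obj A.A) ⊗ D.T.obj A.A)) ≫
      freeAct (D.mul (D.T.obj A.A)) (D.T.obj A.A) ≫ q1x D A ≫ π
      = (D.T.obj A.A ◁ q1x D A) ≫ freeAct (D.mul A.A) A.A ≫ π := by
    rw [q1linπ, ← whisker_exchange_assoc, ← comp_whiskerRight_assoc, D.T.right_unit,
      id_whiskerRight, Category.id_comp]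
    rfl
  have E2 : (D.T.map (D.T.η.app A.A) ▷ (D.T.obj (D.T.obj A.A) ⊗ D.T.obj A.A)) ≫
      freeAct (D.mul (D.T.obj A.A)) (D.T.obj A.A) ≫ q2x D A ≫ π
      = (D.T.obj A.A ◁ q2x D A) ≫ freeAct (D.mul A.A) A.A ≫ π := by
    rw [q2linπ, ← whisker_exchange_assoc, ← comp_whiskerRight_assoc,
      ← D.T.toFunctor.map_comp, A.unit]
    simp
  have E3 : (D.T.η.app (D.T.obj A.A) ▷ (D.T.obj (D.T.obj A.A) ⊗ D.T.obj A.A)) ≫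
      freeAct (D.mul (D.T.obj A.A)) (D.T.obj A.A) ≫ q2x D A ≫ π
      = (D.T.obj A.A ◁ q2x D A) ≫ ((A.a ≫ D.T.η.app A.A) ▷ (D.T.obj A.A ⊗ A.A)) ≫
          freeAct (D.mul A.A) A.A ≫ π := by
    rw [q2linπ, ← whisker_exchange_assoc, ← comp_whiskerRight_assoc, hnatD,
      comp_whiskerRight_assoc]
    rfl
  -- the key balancing property of π
  have hbal : ((A.a ≫ D.T.η.app A.A) ▷ (D.T.obj A.A ⊗ A.A)) ≫
      freeAct (D.mul A.A) A.A ≫ π = freeAct (D.mul A.A) A.A ≫ π := by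
    have hsplit : (D.T.obj A.A ◁ sx D A) ≫
        (D.T.obj A.A ◁ q2x D A) = 𝟙 (D.T.obj A.A ⊗ (D.T.obj A.A ⊗ A.A)) := by
      rw [← MonoidalCategory.whiskerLeft_comp, s_q2, MonoidalCategory.whiskerLeft_id]
    haveI : IsSplitEpi (D.T.obj A.A ◁ q2x D A) := IsSplitEpi.mk' ⟨_, hsplit⟩
    rw [← cancel_epi (D.T.obj A.A ◁ q2x D A)]
    calc (D.T.obj A.A ◁ q2x D A) ≫ ((A.a ≫ D.T.η.app A.A) ▷ (D.T.obj A.A ⊗ A.A)) ≫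
          freeAct (D.mul A.A) A.A ≫ π
        = (D.T.η.app (D.T.obj A.A) ▷ (D.T.obj (D.T.obj A.A) ⊗ D.T.obj A.A)) ≫
            freeAct (D.mul (D.T.obj A.A)) (D.T.obj A.A) ≫ q2x D A ≫ π := E3.symm
      _ = (D.T.η.app (D.T.obj A.A) ▷ (D.T.obj (D.T.obj A.A) ⊗ D.T.obj A.A)) ≫
            freeAct (D.mul (D.T.obj A.A)) (D.T.obj A.A) ≫ q1x D A ≫ π := by rw [← hππ]
      _ = (D.T.obj A.A ◁ q1x D A) ≫ freeAct (D.mul A.A) A.A ≫ π := E1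
      _ = (D.T.map (D.T.η.app A.A) ▷ (D.T.obj (D.T.obj A.A) ⊗ D.T.obj A.A)) ≫
            freeAct (D.mul (D.T.obj A.A)) (D.T.obj A.A) ≫ q1x D A ≫ π := E1'.symm
      _ = (D.T.map (D.T.η.app A.A) ▷ (D.T.obj (D.T.obj A.A) ⊗ D.T.obj A.A)) ≫
            freeAct (D.mul (D.T.obj A.A)) (D.T.obj A.A) ≫ q2x D A ≫ π := by rw [hππ]
      _ = (D.T.obj A.A ◁ q2x D A) ≫ freeAct (D.mul A.A) A.A ≫ π := E2
  -- well-definedness of the action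
  have hr : (A.A ◁ q1x D A) ≫ (D.T.η.app A.A ▷ (D.T.obj A.A ⊗ A.A)) ≫
      freeAct (D.mul A.A) A.A ≫ π
      = (A.A ◁ q2x D A) ≫ (D.T.η.app A.A ▷ (D.T.obj A.A ⊗ A.A)) ≫
          freeAct (D.mul A.A) A.A ≫ π := by
    rw [whisker_exchange_assoc, whisker_exchange_assoc, ← E1, ← E2,
      ← comp_whiskerRight_assoc, ← comp_whiskerRight_assoc, ← hnat2D, hππ]
  obtain ⟨actQ, hactQ, -⟩ := (hw A.A).2
    ((D.T.η.app A.A ▷ (D.T.obj A.A ⊗ A.A)) ≫ freeAct (D.mul A.A) A.A ≫ π) hr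
  -- F ≫ π through the action
  have hAct : freeAct (D.mul A.A) A.A ≫ π
      = (A.a ▷ (D.T.obj A.A ⊗ A.A)) ≫ (A.A ◁ π) ≫ actQ := by
    rw [hactQ, ← comp_whiskerRight_assoc, hbal]
  have hνdA : A.a ≫ D.T.η.app A.A ≫ D.d A.A ≫ π = D.d A.A ≫ π := by
    have q1dπ := congrArg (fun t => t ≫ π) (q1x_d D A)
    have q2dπ := congrArg (fun t => t ≫ π) (q2x_d D A)
    simp only [Category.assoc] at q1dπ q2dπ
    rw [← Category.assoc, ← hnatD, Category.assoc, ← q2dπ, ← hππ, q1dπ,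
      ← Category.assoc, D.T.left_unit]
    simp
  have insπ := congrArg (fun t => t ≫ π) (insertD D A.A)
  simp only [Category.assoc, Category.id_comp] at insπ
  refine ⟨actQ, (D.T.η.app A.A ≫ D.d A.A) ≫ π, ⟨?_, ?_⟩, ?_, ?_, ?_⟩
  · -- one_act
    haveI : Epi ((𝟙_ C) ◁ π) := (hw (𝟙_ C)).epi_of
    rw [← cancel_epi ((𝟙_ C) ◁ π), whisker_exchange_assoc, hactQ, algUnit,
      ← comp_whiskerRight_assoc, Category.assoc, comp_whiskerRight_assoc, hbal]
    have := congrArg (fun t => t ≫ π) (freeAct_one hca A.A)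
    simp only [Category.assoc] at this
    rw [this, leftUnitor_naturality]
  · -- mul_act
    haveI : Epi ((A.A ⊗ A.A) ◁ π) := (hw (A.A ⊗ A.A)).epi_of
    rw [← cancel_epi ((A.A ⊗ A.A) ◁ π), whisker_exchange_assoc, hactQ, algMul]
    have hfm := congrArg (fun t => t ≫ π) (freeAct_mul hca A.A)
    simp only [Category.assoc] at hfm
    conv_lhs => rw [← comp_whiskerRight_assoc]
    simp only [Category.assoc]
    conv_lhs => rw [comp_whiskerRight_assoc, comp_whiskerRight_assoc, hbal, hfm]
    conv_rhs => rw [associator_naturality_right_assoc,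
      ← MonoidalCategory.whiskerLeft_comp_assoc, hactQ,
      MonoidalCategory.whiskerLeft_comp, MonoidalCategory.whiskerLeft_comp,
      Category.assoc, Category.assoc, hactQ, whisker_exchange_assoc]
    rw [← tensorHom_def'_assoc, ← tensorHom_id, associator_naturality_assoc,
      tensorHom_id]
  · -- A.a ≫ dA = d ≫ π
    simpa only [Category.assoc] using hνdA
  · -- derivation property
    rw [MonoidalCategory.tensorHom_def, MonoidalCategory.whiskerLeft_comp]
    simp only [Category.assoc]
    rw [hactQ, whisker_exchange_assoc, ← comp_whiskerRight_assoc,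
      ← whisker_exchange_assoc, hbal, insπ]
    simpa using hνdA.symm
  · -- universal property
    intro M actM hM der hder
    have hνalg : (A.a ⊗ₘ A.a) ≫ algMul D.toAlgebraModality A = D.mul A.A ≫ A.a := by
      rw [algMul, tensorHom_comp_tensorHom_assoc, ← hnatD, ← tensorHom_comp_tensorHom_assoc]
      slice_lhs 2 3 => rw [(D.iscodiff.ismod.map_hom A.a).map_mul]
      slice_lhs 3 4 => rw [← A.assoc]
      slice_lhs 2 3 => rw [← (D.iscodiff.ismod.mu_hom A.A).map_mul]
      simp only [Category.assoc]
      rw [tensorHom_comp_tensorHom_assoc, D.T.left_unit]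
      simp
    have hφlin : freeAct (D.mul A.A) A.A ≫ (A.a ⊗ₘ der) ≫ actM
        = (A.a ▷ (D.T.obj A.A ⊗ A.A)) ≫ (A.A ◁ ((A.a ⊗ₘ der) ≫ actM)) ≫ actM := by
      calc freeAct (D.mul A.A) A.A ≫ (A.a ⊗ₘ der) ≫ actM
          = (α_ _ _ _).inv ≫ (D.mul A.A ▷ A.A) ≫ (A.a ▷ A.A) ≫ (A.A ◁ der) ≫ actM := by
            rw [freeAct_def, MonoidalCategory.tensorHom_def]
            simp only [Category.assoc]
        _ = (α_ _ _ _).inv ≫ ((A.a ⊗ₘ A.a) ▷ A.A) ≫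
              (algMul D.toAlgebraModality A ▷ A.A) ≫ (A.A ◁ der) ≫ actM := by
            slice_lhs 2 3 => rw [← comp_whiskerRight, ← hνalg, comp_whiskerRight]
            simp only [Category.assoc]
        _ = (α_ _ _ _).inv ≫ ((A.a ⊗ₘ A.a) ▷ A.A) ≫ ((A.A ⊗ A.A) ◁ der) ≫
              (algMul D.toAlgebraModality A ▷ M) ≫ actM := by
            rw [← whisker_exchange_assoc]
        _ = (α_ _ _ _).inv ≫ (((A.a ⊗ₘ A.a) ⊗ₘ der) ≫ (α_ A.A A.A M).hom) ≫
              (A.A ◁ actM) ≫ actM := by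
            rw [hM.mul_act]
            slice_lhs 2 3 => rw [← MonoidalCategory.tensorHom_def]
            simp only [Category.assoc]
        _ = (A.a ⊗ₘ (A.a ⊗ₘ der)) ≫ (A.A ◁ actM) ≫ actM := by
            rw [associator_naturality]
            simp only [Category.assoc, Iso.inv_hom_id_assoc]
        _ = (A.a ▷ (D.T.obj A.A ⊗ A.A)) ≫ (A.A ◁ ((A.a ⊗ₘ der) ≫ actM)) ≫ actM := by
            rw [tensorHom_def_assoc, MonoidalCategory.whiskerLeft_comp]
            simp only [Category.assoc]
    have hqφ : q1x D A ≫ (A.a ⊗ₘ der) ≫ actM = q2x D A ≫ (A.a ⊗ₘ der) ≫ actM := by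
      calc q1x D A ≫ (A.a ⊗ₘ der) ≫ actM
          = (D.T.μ.app A.A ▷ D.T.obj A.A) ≫ (D.T.obj A.A ◁ D.d A.A) ≫
              (A.a ▷ (D.T.obj A.A ⊗ A.A)) ≫ (A.A ◁ ((A.a ⊗ₘ der) ≫ actM)) ≫ actM := by
            rw [q1x, Category.assoc, hφlin, MonoidalCategory.tensorHom_def]
            simp only [Category.assoc]
        _ = ((D.T.μ.app A.A ≫ A.a) ▷ D.T.obj A.A) ≫
              (A.A ◁ (D.d A.A ≫ (A.a ⊗ₘ der) ≫ actM)) ≫ actM := by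
            rw [whisker_exchange_assoc, ← comp_whiskerRight_assoc,
              ← MonoidalCategory.whiskerLeft_comp_assoc]
        _ = ((D.T.map A.a ≫ A.a) ▷ D.T.obj A.A) ≫ (A.A ◁ (A.a ≫ der)) ≫ actM := by
            rw [hder, A.assoc]
        _ = q2x D A ≫ (A.a ⊗ₘ der) ≫ actM := by
            rw [q2x, tensorHom_comp_tensorHom_assoc, tensorHom_def_assoc]
    obtain ⟨h, hπh, hun⟩ := hcoeq.2 ((A.a ⊗ₘ der) ≫ actM) hqφ
    refine ⟨h, ⟨?_, ?_⟩, ?_⟩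
    · -- h is a module map
      show actQ ≫ h = (A.A ◁ h) ≫ actM
      haveI : Epi (A.A ◁ π) := (hw A.A).epi_of
      rw [← cancel_epi (A.A ◁ π)]
      slice_rhs 1 2 => rw [← MonoidalCategory.whiskerLeft_comp, hπh]
      rw [← Category.assoc, hactQ]
      simp only [Category.assoc]
      rw [hπh, hφlin, ← comp_whiskerRight_assoc, A.unit]
      simp [MonoidalCategory.whiskerLeft_comp]
    · -- dA ≫ h = der
      simp only [Category.assoc]
      rw [hπh]
      slice_lhs 1 2 => rw [D.iscodiff.d3]
      rw [MonoidalCategory.tensorHom_def]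
      simp only [Category.assoc]
      rw [← comp_whiskerRight_assoc]
      have hu : (D.unit A.A ≫ A.a) = algUnit D.toAlgebraModality A := rfl
      rw [hu, ← whisker_exchange_assoc, hM.one_act, leftUnitor_naturality,
        Iso.inv_hom_id_assoc]
    · -- uniqueness
      rintro h' ⟨hmod', hd'⟩
      refine hun h' ?_
      have hmod'' : actQ ≫ h' = (A.A ◁ h') ≫ actM := hmod'
      have hActh := congrArg (fun t => t ≫ h') hAct
      simp only [Category.assoc] at hActh
      calc π ≫ h'
          = ((D.T.obj A.A ◁ (D.T.η.app A.A ≫ D.d A.A)) ≫ freeAct (D.mul A.A) A.A) ≫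
              π ≫ h' := by rw [insertD D A.A]; simp
        _ = (D.T.obj A.A ◁ (D.T.η.app A.A ≫ D.d A.A)) ≫ (A.a ▷ (D.T.obj A.A ⊗ A.A)) ≫
              (A.A ◁ π) ≫ actQ ≫ h' := by
            simp only [Category.assoc]
            rw [hActh]
        _ = (A.a ▷ A.A) ≫ (A.A ◁ ((D.T.η.app A.A ≫ D.d A.A) ≫ π ≫ h')) ≫ actM := by
            rw [hmod'', whisker_exchange_assoc, ← MonoidalCategory.whiskerLeft_comp_assoc,
              ← MonoidalCategory.whiskerLeft_comp_assoc]
            simp only [Category.assoc]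
            rfl
        _ = (A.a ⊗ₘ der) ≫ actM := by
            have : (D.T.η.app A.A ≫ D.d A.A) ≫ π ≫ h' = der := by
              simpa only [Category.assoc] using hd'
            rw [this, ← tensorHom_def_assoc]

end Build


/-- in a codifferential category with reflexive coequalizers preserved by
the tensor product, every `T`-algebra `(A, ν)` has a universal `T`-derivation; it can be
constructed as the reflexive coequalizer of `Ω_μ, Ω_{Tν} : T²A ⊗ TA ⇉ TA ⊗ A`. -/
theorem statement17 {C : Type u} [Category.{v} C] [MonoidalCategory C] [SymmetricCategory C]
    [AdditiveMonoidal C] [HasBinaryBiproducts C] [HasReflexiveCoequalizers C]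
    (hpres : TensorPreservesReflCoeq C) (D : Codifferential C) (A : D.T.Algebra) :
    -- existence of a universal `T`-derivation
    (∃ (Ω : C) (actQ : A.A ⊗ Ω ⟶ Ω) (dA : A.A ⟶ Ω),
      IsModule (algMul D.toAlgebraModality A) (algUnit D.toAlgebraModality A) actQ ∧
      (D.d A.A ≫ (A.a ⊗ₘ dA) ≫ actQ = A.a ≫ dA) ∧
      (∀ {M : C} (actM : A.A ⊗ M ⟶ M),
        IsModule (algMul D.toAlgebraModality A) (algUnit D.toAlgebraModality A) actM →
        ∀ der : A.A ⟶ M, D.d A.A ≫ (A.a ⊗ₘ der) ≫ actM = A.a ≫ der →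
          ∃! h : Ω ⟶ M, IsModuleMap actQ actM h ∧ dA ≫ h = der)) ∧
    -- the construction as a coequalizer of the induced maps `Ω_μ` and `Ω_{Tν}`
    (∀ (q1 q2 : D.T.obj (D.T.obj A.A) ⊗ D.T.obj A.A ⟶ D.T.obj A.A ⊗ A.A),
      IsModuleMap (freeAct (D.mul (D.T.obj A.A)) (D.T.obj A.A))
        ((D.T.μ.app A.A ▷ (D.T.obj A.A ⊗ A.A)) ≫ freeAct (D.mul A.A) A.A) q1 →
      D.d (D.T.obj A.A) ≫ q1 = D.T.μ.app A.A ≫ D.d A.A →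
      IsModuleMap (freeAct (D.mul (D.T.obj A.A)) (D.T.obj A.A))
        ((D.T.map A.a ▷ (D.T.obj A.A ⊗ A.A)) ≫ freeAct (D.mul A.A) A.A) q2 →
      D.d (D.T.obj A.A) ≫ q2 = D.T.map A.a ≫ D.d A.A →
      ∀ {Q : C} (π : D.T.obj A.A ⊗ A.A ⟶ Q), IsCoeq q1 q2 π →
        ∃ (actQ : A.A ⊗ Q ⟶ Q) (dA : A.A ⟶ Q),
          IsModule (algMul D.toAlgebraModality A) (algUnit D.toAlgebraModality A) actQ ∧
          A.a ≫ dA = D.d A.A ≫ π ∧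
          (D.d A.A ≫ (A.a ⊗ₘ dA) ≫ actQ = A.a ≫ dA) ∧
          (∀ {M : C} (actM : A.A ⊗ M ⟶ M),
            IsModule (algMul D.toAlgebraModality A) (algUnit D.toAlgebraModality A) actM →
            ∀ der : A.A ⟶ M, D.d A.A ≫ (A.a ⊗ₘ der) ≫ actM = A.a ≫ der →
              ∃! h : Q ⟶ M, IsModuleMap actQ actM h ∧ dA ≫ h = der)) := by
  constructor
  · -- Part 1: existence, via the reflexive coequalizer of q1x, q2x
    haveI : HasCoequalizer (q1x D A) (q2x D A) :=
      hasCoequalizer_of_common_section _ (sx D A) (s_q1 D A) (s_q2 D A)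
    have hcoeq : IsCoeq (q1x D A) (q2x D A) (coequalizer.π (q1x D A) (q2x D A)) := by
      refine ⟨coequalizer.condition _ _, fun h w =>
        ⟨coequalizer.desc h w, coequalizer.π_desc _ _, fun y hy => ?_⟩⟩
      exact coequalizer.hom_ext (by rw [hy, coequalizer.π_desc])
    obtain ⟨actQ, dA, hmod, -, hder, huniv⟩ := buildOmega D A hpres _ hcoeq
    exact ⟨_, actQ, dA, hmod, hder, huniv⟩
  · -- Part 2: any coequalizer of maps satisfying the properties of Ω_μ, Ω_{Tν} works
    intro q1 q2 hq1lin hq1d hq2lin hq2d Q π hcoeq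
    have hq1lin' : freeAct (D.mul (D.T.obj A.A)) (D.T.obj A.A) ≫ q1
        = (D.T.obj (D.T.obj A.A) ◁ q1) ≫ (D.T.μ.app A.A ▷ (D.T.obj A.A ⊗ A.A)) ≫
            freeAct (D.mul A.A) A.A := hq1lin
    have hq2lin' : freeAct (D.mul (D.T.obj A.A)) (D.T.obj A.A) ≫ q2
        = (D.T.obj (D.T.obj A.A) ◁ q2) ≫ (D.T.map A.a ▷ (D.T.obj A.A ⊗ A.A)) ≫
            freeAct (D.mul A.A) A.A := hq2lin
    have h01 : (D.T.obj (D.T.obj A.A) ◁ (D.T.η.app (D.T.obj A.A) ≫ D.d (D.T.obj A.A))) ≫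
        freeAct (D.mul (D.T.obj A.A)) (D.T.obj A.A) ≫ q1 = q1 := by
      rw [← Category.assoc, insertD]; simp
    have h02 : (D.T.obj (D.T.obj A.A) ◁ (D.T.η.app (D.T.obj A.A) ≫ D.d (D.T.obj A.A))) ≫
        freeAct (D.mul (D.T.obj A.A)) (D.T.obj A.A) ≫ q2 = q2 := by
      rw [← Category.assoc, insertD]; simp
    have hq1' : q1 = q1x D A := by
      rw [← h01, hq1lin', ← MonoidalCategory.whiskerLeft_comp_assoc]
      simp only [Category.assoc]
      rw [hq1d, Monad.left_unit_assoc, q1x, tensorHom_def']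
      simp only [Category.assoc]
    have hq2' : q2 = q2x D A := by
      rw [← h02, hq2lin', ← MonoidalCategory.whiskerLeft_comp_assoc]
      simp only [Category.assoc]
      rw [hq2d]
      have hnatD' : D.T.η.app (D.T.obj A.A) ≫ D.T.map A.a ≫ D.d A.A
          = A.a ≫ D.T.η.app A.A ≫ D.d A.A := by
        rw [← Category.assoc, hnatD, Category.assoc]
      rw [hnatD', ← q2x_fold D A, tensorHom_def']
      simp only [Category.assoc]
    rw [hq1', hq2'] at hcoeq
    obtain ⟨actQ, dA, hmod, hd, hder, huniv⟩ := buildOmega D A hpres π hcoeq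
    exact ⟨actQ, dA, hmod, hd, hder, huniv⟩

end CodiffPaper
end

section
/- Let C be a symmetric monoidal category in which the tensor product preserves reflexive coequalizers in each variable. Suppose given commutative algebras A₁, A₂, A₃ in C and algebra homomorphisms f, g : A₁ → A₂ and k : A₂ → A₃ whose underlying morphisms form a reflexive coequalizer in C. Let M₁ be an A₁-module, M₂ an A₂-module, and let φ : M₁ → f*(M₂) and γ : M₁ → g*(M₂) be A₁-linear, where f*(M₂) and g*(M₂) denote M₂ with the A₁-actions induced by f and g respectively. Suppose φ, γ : M₁ ⇉ M₂ together with κ : M₂ → M₃ form a reflexive coequalizer in C. Then there is a unique A₃-module structure on M₃ such that κ : M₂ → k*(M₃) is A₂-linear. -/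
open CategoryTheory CategoryTheory.Limits CategoryTheory.MonoidalCategory

universe v u

namespace CodiffPaper

variable {C : Type u} [Category.{v} C]

/-- A coequalizer (in the elementwise formulation) is an epimorphism:
post-composition is cancellable. -/
theorem isCoeq_cancel {C : Type u} [Category.{v} C] {X Y Q : C} {f g : X ⟶ Y}
    {π : Y ⟶ Q} (h : IsCoeq f g π) {Z : C} (a b : Q ⟶ Z) (hab : π ≫ a = π ≫ b) :
    a = b := by
  obtain ⟨u, hu, huniq⟩ := h.2 (π ≫ a) (by rw [← Category.assoc, h.1, Category.assoc])
  exact (huniq a rfl).trans (huniq b hab.symm).symm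

/-- a reflexive coequalizer of algebra maps together with a compatible
reflexive coequalizer of modules induces a unique module structure on the quotient making
the quotient map linear. -/
theorem statement18 {C : Type u} [Category.{v} C] [MonoidalCategory C] [SymmetricCategory C]
    (hpres : TensorPreservesReflCoeq C)
    {A₁ A₂ A₃ : C} (mul₁ : A₁ ⊗ A₁ ⟶ A₁) (one₁ : 𝟙_ C ⟶ A₁)
    (mul₂ : A₂ ⊗ A₂ ⟶ A₂) (one₂ : 𝟙_ C ⟶ A₂)
    (mul₃ : A₃ ⊗ A₃ ⟶ A₃) (one₃ : 𝟙_ C ⟶ A₃)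
    (h₁ : IsCommAlg mul₁ one₁) (h₂ : IsCommAlg mul₂ one₂) (h₃ : IsCommAlg mul₃ one₃)
    (f g : A₁ ⟶ A₂) (k : A₂ ⟶ A₃)
    (hf : IsAlgHom mul₁ one₁ mul₂ one₂ f) (hg : IsAlgHom mul₁ one₁ mul₂ one₂ g)
    (hk : IsAlgHom mul₂ one₂ mul₃ one₃ k)
    (s : A₂ ⟶ A₁) (hsf : s ≫ f = 𝟙 A₂) (hsg : s ≫ g = 𝟙 A₂)
    (hcoeq : IsCoeq f g k)
    {M₁ M₂ M₃ : C} (act₁ : A₁ ⊗ M₁ ⟶ M₁) (act₂ : A₂ ⊗ M₂ ⟶ M₂)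
    (hm₁ : IsModule mul₁ one₁ act₁) (hm₂ : IsModule mul₂ one₂ act₂)
    (φ γ : M₁ ⟶ M₂)
    (hφ : IsModuleMap act₁ ((f ▷ M₂) ≫ act₂) φ)
    (hγ : IsModuleMap act₁ ((g ▷ M₂) ≫ act₂) γ)
    (κ : M₂ ⟶ M₃) (t : M₂ ⟶ M₁) (htφ : t ≫ φ = 𝟙 M₂) (htγ : t ≫ γ = 𝟙 M₂)
    (hmcoeq : IsCoeq φ γ κ) :
    ∃! act₃ : A₃ ⊗ M₃ ⟶ M₃,
      IsModule mul₃ one₃ act₃ ∧ IsModuleMap act₂ ((k ▷ M₃) ≫ act₃) κ := by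

  -- preserved coequalizers
  have hLA₂ := (hpres φ γ t κ htφ htγ hmcoeq A₂).1
  have hRM₃ := (hpres f g s k hsf hsg hcoeq M₃).2
  have hLA₁ := (hpres φ γ t κ htφ htγ hmcoeq A₁).1
  have hLI := (hpres φ γ t κ htφ htγ hmcoeq (𝟙_ C)).1
  have hkA₂ := (hpres f g s k hsf hsg hcoeq A₂).2
  have hkA₃ := (hpres f g s k hsf hsg hcoeq A₃).1
  have hL33 := (hpres φ γ t κ htφ htγ hmcoeq (A₃ ⊗ A₃)).1
  have hkA₂M₂ := (hpres (f ▷ A₂) (g ▷ A₂) (s ▷ A₂) (k ▷ A₂)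
      (by rw [← comp_whiskerRight, hsf, id_whiskerRight])
      (by rw [← comp_whiskerRight, hsg, id_whiskerRight]) hkA₂ M₂).2
  have hkA₃M₂ := (hpres (A₃ ◁ f) (A₃ ◁ g) (A₃ ◁ s) (A₃ ◁ k)
      (by rw [← MonoidalCategory.whiskerLeft_comp, hsf, MonoidalCategory.whiskerLeft_id])
      (by rw [← MonoidalCategory.whiskerLeft_comp, hsg, MonoidalCategory.whiskerLeft_id])
      hkA₃ M₂).2
  -- key module identities
  have keyφ : (A₂ ◁ φ) ≫ act₂ = (s ▷ M₁) ≫ act₁ ≫ φ := by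
    calc (A₂ ◁ φ) ≫ act₂ = ((s ≫ f) ▷ M₁) ≫ (A₂ ◁ φ) ≫ act₂ := by
          rw [hsf, id_whiskerRight, Category.id_comp]
      _ = (s ▷ M₁) ≫ ((A₁ ◁ φ) ≫ (f ▷ M₂)) ≫ act₂ := by
          rw [comp_whiskerRight, whisker_exchange]; simp only [Category.assoc]
      _ = (s ▷ M₁) ≫ act₁ ≫ φ := by rw [Category.assoc, ← hφ]
  have keyγ : (A₂ ◁ γ) ≫ act₂ = (s ▷ M₁) ≫ act₁ ≫ γ := by
    calc (A₂ ◁ γ) ≫ act₂ = ((s ≫ g) ▷ M₁) ≫ (A₂ ◁ γ) ≫ act₂ := by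
          rw [hsg, id_whiskerRight, Category.id_comp]
      _ = (s ▷ M₁) ≫ ((A₁ ◁ γ) ≫ (g ▷ M₂)) ≫ act₂ := by
          rw [comp_whiskerRight, whisker_exchange]; simp only [Category.assoc]
      _ = (s ▷ M₁) ≫ act₁ ≫ γ := by rw [Category.assoc, ← hγ]
  have keyf : (f ▷ M₂) ≫ act₂ = (A₁ ◁ t) ≫ act₁ ≫ φ := by
    calc (f ▷ M₂) ≫ act₂ = (A₁ ◁ (t ≫ φ)) ≫ (f ▷ M₂) ≫ act₂ := by
          rw [htφ, MonoidalCategory.whiskerLeft_id, Category.id_comp]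
      _ = (A₁ ◁ t) ≫ ((A₁ ◁ φ) ≫ (f ▷ M₂)) ≫ act₂ := by
          rw [MonoidalCategory.whiskerLeft_comp]; simp only [Category.assoc]
      _ = (A₁ ◁ t) ≫ act₁ ≫ φ := by rw [Category.assoc, ← hφ]
  have keyg : (g ▷ M₂) ≫ act₂ = (A₁ ◁ t) ≫ act₁ ≫ γ := by
    calc (g ▷ M₂) ≫ act₂ = (A₁ ◁ (t ≫ γ)) ≫ (g ▷ M₂) ≫ act₂ := by
          rw [htγ, MonoidalCategory.whiskerLeft_id, Category.id_comp]
      _ = (A₁ ◁ t) ≫ ((A₁ ◁ γ) ≫ (g ▷ M₂)) ≫ act₂ := by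
          rw [MonoidalCategory.whiskerLeft_comp]; simp only [Category.assoc]
      _ = (A₁ ◁ t) ≫ act₁ ≫ γ := by rw [Category.assoc, ← hγ]
  -- Step 1: descend act₂ ≫ κ through A₂ ◁ κ
  have hcoφ : (A₂ ◁ φ) ≫ act₂ ≫ κ = (A₂ ◁ γ) ≫ act₂ ≫ κ := by
    calc (A₂ ◁ φ) ≫ act₂ ≫ κ = (s ▷ M₁) ≫ act₁ ≫ φ ≫ κ := by
          rw [← Category.assoc, keyφ]; simp only [Category.assoc]
      _ = (s ▷ M₁) ≫ act₁ ≫ γ ≫ κ := by rw [hmcoeq.1]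
      _ = (A₂ ◁ γ) ≫ act₂ ≫ κ := by
          rw [← Category.assoc (A₂ ◁ γ), keyγ]; simp only [Category.assoc]
  obtain ⟨u, hu, huniq⟩ := hLA₂.2 (act₂ ≫ κ) hcoφ
  -- Step 2: descend u through k ▷ M₃
  have hcof : (f ▷ M₃) ≫ u = (g ▷ M₃) ≫ u := by
    apply isCoeq_cancel hLA₁
    calc (A₁ ◁ κ) ≫ (f ▷ M₃) ≫ u = (f ▷ M₂) ≫ (A₂ ◁ κ) ≫ u := by
          rw [← Category.assoc, whisker_exchange, Category.assoc]
      _ = (A₁ ◁ t) ≫ act₁ ≫ φ ≫ κ := by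
          rw [hu, ← Category.assoc, keyf]; simp only [Category.assoc]
      _ = (A₁ ◁ t) ≫ act₁ ≫ γ ≫ κ := by rw [hmcoeq.1]
      _ = (g ▷ M₂) ≫ (A₂ ◁ κ) ≫ u := by
          rw [hu, ← Category.assoc (g ▷ M₂), keyg]; simp only [Category.assoc]
      _ = (A₁ ◁ κ) ≫ (g ▷ M₃) ≫ u := by
          rw [← Category.assoc, ← whisker_exchange, Category.assoc]
  obtain ⟨act₃, hact₃, hact₃uniq⟩ := hRM₃.2 u hcof
  have hlin : act₂ ≫ κ = (A₂ ◁ κ) ≫ (k ▷ M₃) ≫ act₃ := by rw [hact₃, hu]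
  refine ⟨act₃, ⟨⟨?_, ?_⟩, hlin⟩, ?_⟩
  · -- unit axiom
    apply isCoeq_cancel hLI
    calc (𝟙_ C ◁ κ) ≫ (one₃ ▷ M₃) ≫ act₃
        = (𝟙_ C ◁ κ) ≫ (one₂ ▷ M₃) ≫ (k ▷ M₃) ≫ act₃ := by
          rw [← hk.map_one, comp_whiskerRight, Category.assoc]
      _ = (one₂ ▷ M₂) ≫ (A₂ ◁ κ) ≫ (k ▷ M₃) ≫ act₃ := by
          rw [← Category.assoc, whisker_exchange, Category.assoc]
      _ = (one₂ ▷ M₂) ≫ act₂ ≫ κ := by rw [← hlin]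
      _ = (λ_ M₂).hom ≫ κ := by rw [← Category.assoc, hm₂.one_act]
      _ = (𝟙_ C ◁ κ) ≫ (λ_ M₃).hom := by rw [MonoidalCategory.leftUnitor_naturality]
  · -- associativity axiom
    apply isCoeq_cancel hL33
    apply isCoeq_cancel hkA₃M₂
    apply isCoeq_cancel hkA₂M₂
    have hkk : ((k ▷ A₂) ▷ M₂) ≫ ((A₃ ◁ k) ▷ M₂) = ((k ⊗ₘ k) ▷ M₂) := by
      rw [← comp_whiskerRight, ← MonoidalCategory.tensorHom_def]
    simp only [← Category.assoc]
    rw [show ((k ▷ A₂) ▷ M₂) ≫ ((A₃ ◁ k) ▷ M₂) = ((k ⊗ₘ k) ▷ M₂) from hkk]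
    simp only [Category.assoc]
    calc ((k ⊗ₘ k) ▷ M₂) ≫ ((A₃ ⊗ A₃) ◁ κ) ≫ (mul₃ ▷ M₃) ≫ act₃
        = ((A₂ ⊗ A₂) ◁ κ) ≫ (((k ⊗ₘ k) ≫ mul₃) ▷ M₃) ≫ act₃ := by
          rw [← whisker_exchange_assoc, comp_whiskerRight]
          simp only [Category.assoc]
      _ = ((A₂ ⊗ A₂) ◁ κ) ≫ (mul₂ ▷ M₃) ≫ (k ▷ M₃) ≫ act₃ := by
          rw [hk.map_mul, comp_whiskerRight, Category.assoc]
      _ = (mul₂ ▷ M₂) ≫ (A₂ ◁ κ) ≫ (k ▷ M₃) ≫ act₃ := by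
          rw [← Category.assoc, whisker_exchange, Category.assoc]
      _ = (mul₂ ▷ M₂) ≫ act₂ ≫ κ := by rw [← hlin]
      _ = (α_ A₂ A₂ M₂).hom ≫ ((A₂ ◁ act₂) ≫ act₂) ≫ κ := by
          rw [← Category.assoc, hm₂.mul_act]; simp only [Category.assoc]
      _ = (α_ A₂ A₂ M₂).hom ≫ (A₂ ◁ act₂) ≫ (A₂ ◁ κ) ≫ (k ▷ M₃) ≫ act₃ := by
          rw [← hlin]; simp only [Category.assoc]
      _ = (α_ A₂ A₂ M₂).hom ≫ (A₂ ◁ (A₂ ◁ κ)) ≫ (A₂ ◁ (k ▷ M₃)) ≫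
            (A₂ ◁ act₃) ≫ (k ▷ M₃) ≫ act₃ := by
          conv_lhs => rw [← MonoidalCategory.whiskerLeft_comp_assoc, hlin]
          simp only [MonoidalCategory.whiskerLeft_comp, Category.assoc]
      _ = (α_ A₂ A₂ M₂).hom ≫ (A₂ ◁ (k ⊗ₘ κ)) ≫ (k ▷ (A₃ ⊗ M₃)) ≫
            (A₃ ◁ act₃) ≫ act₃ := by
          rw [whisker_exchange_assoc, ← MonoidalCategory.whiskerLeft_comp_assoc,
            ← MonoidalCategory.tensorHom_def']
      _ = (α_ A₂ A₂ M₂).hom ≫ (k ⊗ₘ (k ⊗ₘ κ)) ≫ (A₃ ◁ act₃) ≫ act₃ := by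
          rw [MonoidalCategory.tensorHom_def' k (k ⊗ₘ κ)]; simp only [Category.assoc]
      _ = ((k ⊗ₘ k) ⊗ₘ κ) ≫ (α_ A₃ A₃ M₃).hom ≫ (A₃ ◁ act₃) ≫ act₃ := by
          rw [← Category.assoc, ← MonoidalCategory.associator_naturality, Category.assoc]
      _ = ((k ⊗ₘ k) ▷ M₂) ≫ ((A₃ ⊗ A₃) ◁ κ) ≫ (α_ A₃ A₃ M₃).hom ≫
            (A₃ ◁ act₃) ≫ act₃ := by
          rw [MonoidalCategory.tensorHom_def (k ⊗ₘ k) κ]; simp only [Category.assoc]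
  · -- uniqueness
    rintro act₃' ⟨-, hlin'⟩
    exact hact₃uniq act₃' (huniq ((k ▷ M₃) ≫ act₃') hlin'.symm)


end CodiffPaper
end
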